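/- arXiv:2602.07975 — 5 statements merged into one kernel-verified Lean document; each statement's English description precedes it below -/
import Mathlib

section
/- Let G be a connected simple (undirected) graph on N ≥ 2 vertices and let L ∈ ℝ^{N×N} be its Laplacian. Then every nonzero eigenvalue λ of L (i.e., every real λ ≠ 0 such that Lv = λv for some v ≠ 0) satisfies λ ≥ 4/(N(N−1)). -/
open Finset Matrix

lemma tele_aux (u : ℕ → ℝ) {a b : ℕ} (hab : a ≤ b) :
    ∑ k ∈ Finset.Ico a b, (u (k+1) - u k) = u b - u a := by
  rw [Finset.sum_Ico_eq_sub _ hab, Finset.sum_range_sub, Finset.sum_range_sub]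
  ring

lemma fiber_sum_aux (u : ℕ → ℝ) (hu : Monotone u) (F : Finset ℕ) (hF : F.Nonempty)
    (lo hi : ℝ) (h1 : ∀ k ∈ F, lo ≤ u k) (h2 : ∀ k ∈ F, u (k+1) ≤ hi) :
    ∑ k ∈ F, (u (k+1) - u k) ≤ hi - lo := by
  have hsub : F ⊆ Finset.Ico (F.min' hF) (F.max' hF + 1) := by
    intro k hk
    simp only [Finset.mem_Ico]
    exact ⟨F.min'_le k hk, Nat.lt_succ_of_le (F.le_max' k hk)⟩
  calc ∑ k ∈ F, (u (k+1) - u k)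
      ≤ ∑ k ∈ Finset.Ico (F.min' hF) (F.max' hF + 1), (u (k+1) - u k) := by
        apply Finset.sum_le_sum_of_subset_of_nonneg hsub
        intro k _ _
        exact sub_nonneg.2 (hu (Nat.le_succ k))
    _ = u (F.max' hF + 1) - u (F.min' hF) := by
        apply tele_aux
        exact Nat.le_succ_of_le (F.min'_le _ (F.max'_mem hF))
    _ ≤ hi - lo := sub_le_sub (h2 _ (F.max'_mem hF)) (h1 _ (F.min'_mem hF))

/-- Every nonzero eigenvalue `lam` of the Laplacian of a connected simple
graph on `N ≥ 2` vertices satisfies `lam ≥ 4 / (N * (N - 1))`. -/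
theorem laplacian_nonzero_eigenvalue_lower_bound
    (N : ℕ) (hN : 2 ≤ N) (G : SimpleGraph (Fin N)) [DecidableRel G.Adj]
    (hconn : G.Connected) (L : Matrix (Fin N) (Fin N) ℝ) (hL : L = G.lapMatrix ℝ)
    (lam : ℝ) (hlam : lam ≠ 0)
    (heig : ∃ v : Fin N → ℝ, v ≠ 0 ∧ L.mulVec v = lam • v) :
    4 / ((N : ℝ) * ((N : ℝ) - 1)) ≤ lam := by
  obtain ⟨v, hv, hev⟩ := heig
  have hNR : (2:ℝ) ≤ (N:ℝ) := by exact_mod_cast hN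
  set P : ℝ := ∑ i, v i ^ 2 with hPdef
  set Q : ℝ := ∑ i, ∑ j, if G.Adj i j then (v i - v j)^2 else 0 with hQdef
  -- quadratic form identity
  have hQ : Q = 2 * (lam * P) := by
    have h1 : v ⬝ᵥ (L *ᵥ v) = lam * P := by
      rw [hev]
      simp only [dotProduct, Pi.smul_apply, smul_eq_mul, hPdef, Finset.mul_sum]
      apply Finset.sum_congr rfl
      intro i _
      ring
    have h2 : v ⬝ᵥ (L *ᵥ v) = Q / 2 := by
      rw [hL, ← Matrix.toLinearMap₂'_apply', SimpleGraph.lapMatrix_toLinearMap₂']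
    rw [h2] at h1
    linarith
  -- sum of v is zero
  have hsum : ∑ i, v i = 0 := by
    have hone : (fun _ : Fin N => (1:ℝ)) ⬝ᵥ (L *ᵥ v) = (fun _ : Fin N => (1:ℝ)) ⬝ᵥ (lam • v) := by
      rw [hev]
    have hsymL : L.IsSymm := by rw [hL]; exact SimpleGraph.isSymm_lapMatrix ℝ G
    have hzero : (fun _ : Fin N => (1:ℝ)) ⬝ᵥ (L *ᵥ v) = 0 := by
      rw [Matrix.dotProduct_mulVec, ← Matrix.mulVec_transpose, hsymL.eq, hL,
        SimpleGraph.lapMatrix_mulVec_const_eq_zero]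
      simp [dotProduct]
    have hone2 : lam * ∑ i, v i = 0 := by
      rw [← hzero, hone]
      simp [dotProduct, Finset.mul_sum]
    rcases mul_eq_zero.1 hone2 with h | h
    · exact absurd h hlam
    · exact h
  have hP : 0 < P := by
    obtain ⟨i, hi⟩ := Function.ne_iff.1 hv
    have hi' : v i ≠ 0 := by simpa using hi
    have h1 : 0 < v i ^ 2 := sq_pos_of_ne_zero hi'
    exact lt_of_lt_of_le h1 (Finset.single_le_sum (f := fun i => v i ^ 2)
      (fun _ _ => sq_nonneg _) (Finset.mem_univ i))
  -- sorting
  set σ : Equiv.Perm (Fin N) := Tuple.sort v with hσdef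
  have hmono : Monotone (v ∘ σ) := Tuple.monotone_sort v
  have hN1 : ∀ m : ℕ, min m (N-1) < N := fun m => by omega
  set u : ℕ → ℝ := fun m => v (σ ⟨min m (N-1), hN1 m⟩) with hudef
  have humono : Monotone u := by
    intro a b hab
    exact hmono (by simp only [Fin.mk_le_mk]; omega)
  have hu_fin : ∀ i : Fin N, u (i:ℕ) = v (σ i) := by
    intro i
    have h : (⟨min (i:ℕ) (N-1), hN1 (i:ℕ)⟩ : Fin N) = i := by
      apply Fin.ext; simp only []; omega
    simp only [hudef, h]
  set g : ℕ → ℝ := fun k => u (k+1) - u k with hgdef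
  have hg : ∀ k, 0 ≤ g k := fun k => sub_nonneg.2 (humono (Nat.le_succ k))
  set G2 : ℝ := ∑ k ∈ Finset.range (N-1), g k ^ 2 with hG2def
  have hG2nn : 0 ≤ G2 := Finset.sum_nonneg fun k _ => sq_nonneg _
  -- hA : sum over all pairs equals 2 N P
  have hA : ∑ i : Fin N, ∑ j : Fin N, (v i - v j)^2 = 2 * N * P := by
    have expand : ∀ i : Fin N, ∑ j : Fin N, (v i - v j)^2
        = N * v i ^ 2 - 2 * v i * (∑ j, v j) + P := by
      intro i
      have : ∀ j : Fin N, (v i - v j)^2 = v i ^ 2 - 2 * v i * v j + v j ^ 2 :=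
        fun j => by ring
      rw [Finset.sum_congr rfl (fun j _ => this j), Finset.sum_add_distrib,
        Finset.sum_sub_distrib, Finset.sum_const, ← Finset.mul_sum]
      simp only [Finset.card_univ, Fintype.card_fin, nsmul_eq_mul, hPdef]
    rw [Finset.sum_congr rfl (fun i _ => expand i), Finset.sum_add_distrib,
      Finset.sum_sub_distrib, hsum, Finset.sum_const, Finset.card_univ, Fintype.card_fin,
      nsmul_eq_mul, ← Finset.mul_sum, ← hPdef]
    simp only [Finset.sum_const_zero, mul_zero]
    ring
  -- hAu : change variables to sorted order
  have hAu : ∑ i : Fin N, ∑ j : Fin N, (v i - v j)^2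
      = ∑ i ∈ Finset.range N, ∑ j ∈ Finset.range N, (u i - u j)^2 := by
    have h1 : ∑ i : Fin N, ∑ j : Fin N, (v (σ i) - v (σ j))^2
        = ∑ i : Fin N, ∑ j : Fin N, (v i - v j)^2 :=
      Fintype.sum_equiv σ _ _ (fun x => Fintype.sum_equiv σ _ _ (fun y => rfl))
    rw [← h1]
    have h2 : ∀ i j : Fin N, (v (σ i) - v (σ j))^2 = (u (i:ℕ) - u (j:ℕ))^2 := by
      intro i j; rw [hu_fin i, hu_fin j]
    rw [Finset.sum_congr rfl (fun i _ => Finset.sum_congr rfl (fun j _ => h2 i j))]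
    rw [← Fin.sum_univ_eq_sum_range (fun i => ∑ j ∈ Finset.range N, (u i - u j)^2) N]
    exact Finset.sum_congr rfl fun i _ =>
      Fin.sum_univ_eq_sum_range (fun j => (u (i:ℕ) - u j)^2) N
  -- per-pair bound via Cauchy-Schwarz on gaps
  have key : ∀ i j : ℕ, i ≤ j → j < N →
      (u j - u i)^2 ≤ ((N:ℝ)-1) * ∑ k ∈ Finset.range (N-1),
        (if i ≤ k ∧ k < j then g k ^ 2 else 0) := by
    intro i j hij hj
    have hfil : ∑ k ∈ Finset.range (N-1), (if i ≤ k ∧ k < j then g k ^ 2 else 0)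
        = ∑ k ∈ Finset.Ico i j, g k ^ 2 := by
      rw [← Finset.sum_filter]
      congr 1
      ext k
      simp only [Finset.mem_filter, Finset.mem_range, Finset.mem_Ico]
      omega
    have htel : u j - u i = ∑ k ∈ Finset.Ico i j, g k := by
      rw [hgdef]; exact (tele_aux u hij).symm
    rw [hfil, htel]
    calc (∑ k ∈ Finset.Ico i j, g k)^2
        ≤ (Finset.Ico i j).card * ∑ k ∈ Finset.Ico i j, g k ^ 2 :=
          sq_sum_le_card_mul_sum_sq
      _ ≤ ((N:ℝ)-1) * ∑ k ∈ Finset.Ico i j, g k ^ 2 := by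
          apply mul_le_mul_of_nonneg_right _ (Finset.sum_nonneg fun k _ => sq_nonneg _)
          rw [Nat.card_Ico]
          have h1 : j - i ≤ N - 1 := by omega
          calc ((j - i : ℕ):ℝ) ≤ ((N-1:ℕ):ℝ) := by exact_mod_cast h1
            _ = (N:ℝ) - 1 := by rw [Nat.cast_sub (by omega : 1 ≤ N), Nat.cast_one]
  have hpair : ∀ i ∈ Finset.range N, ∀ j ∈ Finset.range N,
      (u i - u j)^2 ≤ ((N:ℝ)-1) * ∑ k ∈ Finset.range (N-1),
        (if min i j ≤ k ∧ k < max i j then g k ^ 2 else 0) := by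
    intro i hi j hj
    rw [Finset.mem_range] at hi hj
    rcases le_total i j with h | h
    · rw [min_eq_left h, max_eq_right h, show (u i - u j)^2 = (u j - u i)^2 by ring]
      exact key i j h hj
    · rw [min_eq_right h, max_eq_left h]
      exact key j i h hi
  -- counting
  have hcount : ∀ k ∈ Finset.range (N-1),
      ∑ i ∈ Finset.range N, ∑ j ∈ Finset.range N,
        (if min i j ≤ k ∧ k < max i j then g k ^ 2 else 0) ≤ (N:ℝ)^2/2 * g k ^ 2 := by
    intro k hk
    rw [Finset.mem_range] at hk
    set c := g k ^ 2 with hc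
    have hcnn : 0 ≤ c := sq_nonneg _
    have hsplit : ∀ i j : ℕ, (if min i j ≤ k ∧ k < max i j then c else 0)
        = (if i ≤ k ∧ k < j then c else 0) + (if j ≤ k ∧ k < i then c else 0) := by
      intro i j
      have h1 : (min i j ≤ k ∧ k < max i j) ↔ ((i ≤ k ∧ k < j) ∨ (j ≤ k ∧ k < i)) := by
        omega
      by_cases hb : i ≤ k ∧ k < j
      · have hc2 : ¬(j ≤ k ∧ k < i) := by omega
        have hyes : min i j ≤ k ∧ k < max i j := by omega
        rw [if_pos hyes, if_pos hb, if_neg hc2, add_zero]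
      · by_cases hc2 : j ≤ k ∧ k < i
        · have hyes : min i j ≤ k ∧ k < max i j := by omega
          rw [if_pos hyes, if_neg hb, if_pos hc2, zero_add]
        · have hno : ¬(min i j ≤ k ∧ k < max i j) := by omega
          rw [if_neg hno, if_neg hb, if_neg hc2, add_zero]
    have eval1 : ∑ i ∈ Finset.range N, ∑ j ∈ Finset.range N, (if i ≤ k ∧ k < j then c else 0)
        = ((k+1 : ℕ):ℝ) * ((N-1-k : ℕ):ℝ) * c := by
      have inner : ∀ i : ℕ, ∑ j ∈ Finset.range N, (if i ≤ k ∧ k < j then c else 0)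
          = if i ≤ k then ((N-1-k : ℕ):ℝ) * c else 0 := by
        intro i
        by_cases hik : i ≤ k
        · simp only [hik, true_and, if_true]
          rw [← Finset.sum_filter]
          have hfe : (Finset.range N).filter (fun j => k < j) = Finset.Ico (k+1) N := by
            ext j; simp only [Finset.mem_filter, Finset.mem_range, Finset.mem_Ico]; omega
          rw [hfe, Finset.sum_const, Nat.card_Ico, nsmul_eq_mul]
          congr 2
          omega
        · simp [hik]
      rw [Finset.sum_congr rfl (fun i _ => inner i), ← Finset.sum_filter]
      have hfe2 : (Finset.range N).filter (fun i => i ≤ k) = Finset.range (k+1) := by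
        ext i; simp only [Finset.mem_filter, Finset.mem_range]; omega
      rw [hfe2, Finset.sum_const, Finset.card_range, nsmul_eq_mul]
      push_cast
      ring
    have htot : ∑ i ∈ Finset.range N, ∑ j ∈ Finset.range N,
        (if min i j ≤ k ∧ k < max i j then c else 0)
        = 2 * (((k+1 : ℕ):ℝ) * ((N-1-k : ℕ):ℝ) * c) := by
      rw [Finset.sum_congr rfl (fun i _ => Finset.sum_congr rfl (fun j _ => hsplit i j))]
      simp only [Finset.sum_add_distrib]
      rw [Finset.sum_comm (s := Finset.range N) (t := Finset.range N)
        (f := fun i j => if j ≤ k ∧ k < i then c else 0)]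
      rw [eval1]
      ring
    rw [htot]
    have hab : ((k+1:ℕ):ℝ) + ((N-1-k:ℕ):ℝ) = (N:ℝ) := by
      have h2 : (k+1) + (N-1-k) = N := by omega
      exact_mod_cast congrArg (Nat.cast (R := ℝ)) h2
    have h4ab : 2 * (((k+1:ℕ):ℝ) * ((N-1-k:ℕ):ℝ)) ≤ (N:ℝ)^2/2 := by
      nlinarith [sq_nonneg (((k+1:ℕ):ℝ) - ((N-1-k:ℕ):ℝ))]
    calc 2 * (((k+1 : ℕ):ℝ) * ((N-1-k : ℕ):ℝ) * c)
        = (2 * (((k+1:ℕ):ℝ) * ((N-1-k:ℕ):ℝ))) * c := by ring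
      _ ≤ ((N:ℝ)^2/2) * c := mul_le_mul_of_nonneg_right h4ab hcnn
  -- combine into main inequality on A
  have hAG : 2*(N:ℝ)*P ≤ ((N:ℝ)-1) * ((N:ℝ)^2/2) * G2 := by
    calc 2*(N:ℝ)*P = ∑ i ∈ Finset.range N, ∑ j ∈ Finset.range N, (u i - u j)^2 := by
          rw [← hAu, hA]
      _ ≤ ∑ i ∈ Finset.range N, ∑ j ∈ Finset.range N, (((N:ℝ)-1) *
            ∑ k ∈ Finset.range (N-1), (if min i j ≤ k ∧ k < max i j then g k ^ 2 else 0)) :=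
          Finset.sum_le_sum fun i hi => Finset.sum_le_sum fun j hj => hpair i hi j hj
      _ = ((N:ℝ)-1) * ∑ k ∈ Finset.range (N-1), ∑ i ∈ Finset.range N, ∑ j ∈ Finset.range N,
            (if min i j ≤ k ∧ k < max i j then g k ^ 2 else 0) := by
          simp only [← Finset.mul_sum]
          congr 1
          rw [Finset.sum_congr rfl (fun i _ => Finset.sum_comm)]
          exact Finset.sum_comm
      _ ≤ ((N:ℝ)-1) * ∑ k ∈ Finset.range (N-1), ((N:ℝ)^2/2 * g k ^ 2) :=
          mul_le_mul_of_nonneg_left (Finset.sum_le_sum hcount) (by linarith)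
      _ = ((N:ℝ)-1) * ((N:ℝ)^2/2) * G2 := by
          rw [← Finset.mul_sum, ← hG2def]
          ring
  -- connectivity cut: for each threshold k there is a crossing edge
  have hcut : ∀ k : ℕ, ∃ p : Fin N × Fin N, k < N-1 →
      G.Adj p.1 p.2 ∧ ((σ.symm p.1 : ℕ) ≤ k) ∧ (k < (σ.symm p.2 : ℕ)) := by
    intro k
    by_cases hk : k < N - 1
    · set a := σ ⟨0, by omega⟩ with ha
      set b := σ ⟨N-1, by omega⟩ with hb
      obtain ⟨w⟩ := hconn.preconnected a b
      have haS : a ∈ {x : Fin N | (σ.symm x : ℕ) ≤ k} := by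
        simp only [Set.mem_setOf_eq, ha, Equiv.symm_apply_apply]
        omega
      have hbS : b ∉ {x : Fin N | (σ.symm x : ℕ) ≤ k} := by
        simp only [Set.mem_setOf_eq, hb, Equiv.symm_apply_apply]
        omega
      obtain ⟨d, _, hd1, hd2⟩ := w.exists_boundary_dart _ haS hbS
      refine ⟨(d.fst, d.snd), fun _ => ⟨d.adj, ?_, ?_⟩⟩
      · exact hd1
      · simp only [Set.mem_setOf_eq] at hd2
        show k < (σ.symm d.snd : ℕ)
        omega
    · exact ⟨(σ ⟨0, by omega⟩, σ ⟨0, by omega⟩), fun h => absurd h hk⟩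
  choose f hf using hcut
  set I : Finset (Fin N × Fin N) := (Finset.range (N-1)).image f with hIdef
  have hfib : ∑ p ∈ I, ∑ k ∈ (Finset.range (N-1)).filter (fun k => f k = p), g k ^ 2
      = G2 := by
    rw [hG2def]
    exact Finset.sum_fiberwise_of_maps_to (fun k hk => Finset.mem_image_of_mem f hk) _
  have hfiber_bound : ∀ p ∈ I,
      ∑ k ∈ (Finset.range (N-1)).filter (fun k => f k = p), g k ^ 2
      ≤ (v p.2 - v p.1)^2 := by
    intro p hp
    set F := (Finset.range (N-1)).filter (fun k => f k = p) with hFdef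
    obtain ⟨k₀, hk₀, hfk₀⟩ := Finset.mem_image.1 hp
    have hFne : F.Nonempty := ⟨k₀, Finset.mem_filter.2 ⟨hk₀, hfk₀⟩⟩
    have hprop : ∀ k ∈ F, k < N-1 ∧ f k = p := by
      intro k hk
      have h := Finset.mem_filter.1 hk
      exact ⟨Finset.mem_range.1 h.1, h.2⟩
    have hlo : ∀ k ∈ F, v p.1 ≤ u k := by
      intro k hk
      obtain ⟨hkN, hfk⟩ := hprop k hk
      obtain ⟨hadj, hle, hgt⟩ := hf k hkN
      rw [← hfk]
      have h1 : v (f k).1 = (v ∘ σ) (σ.symm (f k).1) := by simp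
      have h2 : u k = (v ∘ σ) ⟨min k (N-1), hN1 k⟩ := rfl
      rw [h1, h2]
      apply hmono
      rw [Fin.le_def]
      simp only []
      omega
    have hhi : ∀ k ∈ F, u (k+1) ≤ v p.2 := by
      intro k hk
      obtain ⟨hkN, hfk⟩ := hprop k hk
      obtain ⟨hadj, hle, hgt⟩ := hf k hkN
      rw [← hfk]
      have h1 : v (f k).2 = (v ∘ σ) (σ.symm (f k).2) := by simp
      have h2 : u (k+1) = (v ∘ σ) ⟨min (k+1) (N-1), hN1 (k+1)⟩ := rfl
      rw [h1, h2]
      apply hmono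
      rw [Fin.le_def]
      simp only []
      have hlt : (σ.symm (f k).2 : ℕ) < N := (σ.symm (f k).2).isLt
      omega
    have hsum_le : ∑ k ∈ F, g k ≤ v p.2 - v p.1 := by
      have h := fiber_sum_aux u humono F hFne (v p.1) (v p.2) hlo hhi
      simpa [hgdef] using h
    calc ∑ k ∈ F, g k ^ 2 ≤ (∑ k ∈ F, g k)^2 :=
          Finset.sum_sq_le_sq_sum_of_nonneg (fun k _ => hg k)
      _ ≤ (v p.2 - v p.1)^2 :=
          pow_le_pow_left₀ (Finset.sum_nonneg fun k _ => hg k) hsum_le 2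
  have hG2I : G2 ≤ ∑ p ∈ I, (v p.2 - v p.1)^2 := by
    rw [← hfib]
    exact Finset.sum_le_sum hfiber_bound
  have hImem : ∀ p ∈ I, G.Adj p.1 p.2 ∧ ((σ.symm p.1 : ℕ) < (σ.symm p.2 : ℕ)) := by
    intro p hp
    obtain ⟨k, hk, hfk⟩ := Finset.mem_image.1 hp
    obtain ⟨hadj, hle, hgt⟩ := hf k (Finset.mem_range.1 hk)
    rw [← hfk]
    exact ⟨hadj, by omega⟩
  have hQI : 2 * ∑ p ∈ I, (v p.2 - v p.1)^2 ≤ Q := by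
    set I' := I.image Prod.swap with hI'def
    have hdisj : Disjoint I I' := by
      rw [Finset.disjoint_left]
      intro p hp hp'
      obtain ⟨q, hq, hqp⟩ := Finset.mem_image.1 hp'
      have h1 := (hImem p hp).2
      have h2 := (hImem q hq).2
      rw [← hqp] at h1
      simp only [Prod.fst_swap, Prod.snd_swap] at h1
      omega
    have hQform : Q = ∑ p ∈ Finset.univ ×ˢ Finset.univ,
        (if G.Adj p.1 p.2 then (v p.1 - v p.2)^2 else 0) := by
      rw [hQdef, Finset.sum_product]
    have hadj' : ∀ p ∈ I ∪ I', G.Adj p.1 p.2 := by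
      intro p hp
      rcases Finset.mem_union.1 hp with h | h
      · exact (hImem p h).1
      · obtain ⟨q, hq, hqp⟩ := Finset.mem_image.1 h
        rw [← hqp]
        exact ((hImem q hq).1).symm
    have step1 : ∑ p ∈ I ∪ I', (v p.1 - v p.2)^2 ≤ Q := by
      rw [hQform]
      calc ∑ p ∈ I ∪ I', (v p.1 - v p.2)^2
          = ∑ p ∈ I ∪ I', (if G.Adj p.1 p.2 then (v p.1 - v p.2)^2 else 0) :=
            Finset.sum_congr rfl (fun p hp => by rw [if_pos (hadj' p hp)])
        _ ≤ _ := Finset.sum_le_sum_of_subset_of_nonneg (fun p _ => by simp)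
              (fun p _ _ => by split_ifs <;> positivity)
    have step2 : ∑ p ∈ I ∪ I', (v p.1 - v p.2)^2
        = 2 * ∑ p ∈ I, (v p.2 - v p.1)^2 := by
      rw [Finset.sum_union hdisj]
      have h3 : ∑ p ∈ I', (v p.1 - v p.2)^2 = ∑ p ∈ I, (v p.2 - v p.1)^2 := by
        rw [hI'def, Finset.sum_image (fun a _ b _ h => Prod.swap_injective h)]
        exact Finset.sum_congr rfl (fun p _ => by simp)
      have h4 : ∑ p ∈ I, (v p.1 - v p.2)^2 = ∑ p ∈ I, (v p.2 - v p.1)^2 :=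
        Finset.sum_congr rfl (fun p _ => by ring)
      rw [h3, h4]
      ring
    linarith [step1, step2]
  -- final arithmetic
  have hG2lam : G2 ≤ lam * P := by linarith [hG2I, hQI, hQ]
  have hfinal : 2*(N:ℝ)*P ≤ ((N:ℝ)-1) * ((N:ℝ)^2/2) * (lam * P) := by
    calc 2*(N:ℝ)*P ≤ ((N:ℝ)-1)*((N:ℝ)^2/2)*G2 := hAG
      _ ≤ ((N:ℝ)-1)*((N:ℝ)^2/2)*(lam*P) := by
          apply mul_le_mul_of_nonneg_left hG2lam
          nlinarith [hNR, sq_nonneg ((N:ℝ))]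
  have hkey : 2*(N:ℝ) ≤ ((N:ℝ)-1)*((N:ℝ)^2/2)*lam := by
    have h := hfinal
    rw [show ((N:ℝ)-1)*((N:ℝ)^2/2)*(lam*P) = (((N:ℝ)-1)*((N:ℝ)^2/2)*lam)*P by ring,
      show 2*(N:ℝ)*P = (2*(N:ℝ))*P by ring] at h
    exact le_of_mul_le_mul_right h hP
  rw [div_le_iff₀ (by nlinarith [hNR] : (0:ℝ) < (N:ℝ)*((N:ℝ)-1))]
  have hNpos : (0:ℝ) < 2*(N:ℝ) := by linarith
  have h3' := mul_le_mul_of_nonneg_left hkey (by norm_num : (0:ℝ) ≤ 4)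
  have h3 : (2*(N:ℝ)) * 4 ≤ (2*(N:ℝ)) * (lam * ((N:ℝ)*((N:ℝ)-1))) := by
    calc (2*(N:ℝ)) * 4 = 4 * (2*(N:ℝ)) := by ring
      _ ≤ 4 * (((N:ℝ)-1)*((N:ℝ)^2/2)*lam) := h3'
      _ = (2*(N:ℝ)) * (lam * ((N:ℝ)*((N:ℝ)-1))) := by ring
  exact le_of_mul_le_mul_left h3 hNpos
end

section
/- Let G be a simple (undirected) graph on N ≥ 1 vertices with Laplacian L ∈ ℝ^{N×N}, and let Δ ∈ ℝ^{N×N} be a diagonal matrix all of whose diagonal entries lie in {0,1}. Set H = L + Δ. Then every nonzero eigenvalue λ of H (i.e., every real λ ≠ 0 such that Hv = λv for some v ≠ 0) satisfies λ ≥ 4/(N(N²−N+4)). -/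
open Finset Matrix SimpleGraph

private lemma aux_cs (a b L S : ℝ) (hL : 0 ≤ L) (hS : 0 ≤ S) (h : a^2 ≤ L*S) :
    (a+b)^2 ≤ (L+1)*(S+b^2) := by
  rcases eq_or_lt_of_le hL with h0 | hpos
  · have ha : a = 0 := by nlinarith [sq_nonneg a]
    subst ha; nlinarith
  · have hE : 0 ≤ S + L*b^2 - 2*a*b := by nlinarith [sq_nonneg (a - L*b)]
    nlinarith

private lemma chain_bound {V : Type*} {G : SimpleGraph V} (x : V → ℝ) {a b : V} (p : G.Walk a b) :
    (x b - x a)^2 ≤ (p.length : ℝ) *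
      (p.darts.map (fun d => (x d.toProd.1 - x d.toProd.2)^2)).sum := by
  induction p with
  | nil => simp
  | @cons u c b h q ih =>
    simp only [SimpleGraph.Walk.darts_cons, SimpleGraph.Walk.length_cons, List.map_cons,
      List.sum_cons, Nat.cast_add, Nat.cast_one]
    have hS : 0 ≤ (q.darts.map (fun d => (x d.toProd.1 - x d.toProd.2)^2)).sum := by
      apply List.sum_nonneg
      intro y hy
      obtain ⟨d, -, rfl⟩ := List.mem_map.mp hy
      positivity
    have := aux_cs (x b - x c) (x c - x u) q.length _ (by positivity) hS ih
    have h2 : (x b - x c) + (x c - x u) = x b - x u := by ring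
    rw [h2] at this
    nlinarith [this]

private lemma steps_le_double {V : Type*} [Fintype V] [DecidableEq V] {G : SimpleGraph V}
    [DecidableRel G.Adj] (x : V → ℝ) {a b : V} (p : G.Walk a b) (hp : p.edges.Nodup) :
    (p.darts.map (fun d => (x d.toProd.1 - x d.toProd.2)^2)).sum ≤
      (∑ i, ∑ j, if G.Adj i j then (x i - x j)^2 else 0) / 2 := by
  classical
  set g : G.Dart → ℝ := fun d => (x d.toProd.1 - x d.toProd.2)^2 with hg
  have hdn : p.darts.Nodup := by
    have : p.edges = p.darts.map SimpleGraph.Dart.edge := rfl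
    rw [this] at hp
    exact hp.of_map _
  have hinj : ∀ d₁ ∈ p.darts, ∀ d₂ ∈ p.darts, d₁.edge = d₂.edge → d₁ = d₂ := by
    intro d₁ h₁ d₂ h₂ he
    by_contra hne
    have : ¬ (p.darts.map SimpleGraph.Dart.edge).Nodup := by
      intro hnd
      exact hne ((List.inj_on_of_nodup_map hnd) h₁ h₂ he)
    exact this hp
  set A : Finset G.Dart := p.darts.toFinset with hA
  set B : Finset G.Dart := A.image SimpleGraph.Dart.symm with hB
  have hdisj : Disjoint A B := by
    rw [Finset.disjoint_left]
    intro d hdA hdB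
    obtain ⟨e, heA, rfl⟩ := Finset.mem_image.mp hdB
    have h1 : e.symm.edge = e.edge := SimpleGraph.Dart.edge_symm e
    have := hinj _ (List.mem_toFinset.mp hdA) _ (List.mem_toFinset.mp heA) h1
    exact (SimpleGraph.Dart.symm_ne e) this
  have hgsymm : ∀ d : G.Dart, g d.symm = g d := by
    intro d
    simp only [hg, SimpleGraph.Dart.symm, Prod.fst_swap, Prod.snd_swap]
    ring
  have hBsum : ∑ d ∈ B, g d = ∑ d ∈ A, g d := by
    rw [hB, Finset.sum_image (fun d _ e _ h => SimpleGraph.Dart.symm_involutive.injective h)]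
    exact Finset.sum_congr rfl fun d _ => hgsymm d
  have hlist : (p.darts.map g).sum = ∑ d ∈ A, g d := by
    rw [hA, List.sum_toFinset _ hdn]
  have himage : ∑ d ∈ A ∪ B, g d =
      ∑ q ∈ (A ∪ B).image SimpleGraph.Dart.toProd,
        (if G.Adj q.1 q.2 then (x q.1 - x q.2)^2 else 0) := by
    rw [Finset.sum_image (fun d _ e _ h => SimpleGraph.Dart.toProd_injective h)]
    refine Finset.sum_congr rfl fun d _ => ?_
    rw [if_pos d.adj]
  have hsub : ∑ q ∈ (A ∪ B).image SimpleGraph.Dart.toProd,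
        (if G.Adj q.1 q.2 then (x q.1 - x q.2)^2 else 0) ≤
      ∑ q ∈ (Finset.univ ×ˢ Finset.univ),
        (if G.Adj q.1 q.2 then (x q.1 - x q.2)^2 else 0) := by
    apply Finset.sum_le_sum_of_subset_of_nonneg
    · intro q _; simp
    · intro q _ _
      by_cases h : G.Adj q.1 q.2 <;> simp [h] <;> positivity
  have hprod : ∑ q ∈ (Finset.univ ×ˢ Finset.univ : Finset (V × V)),
        (if G.Adj q.1 q.2 then (x q.1 - x q.2)^2 else 0) =
      ∑ i, ∑ j, if G.Adj i j then (x i - x j)^2 else 0 := by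
    rw [Finset.sum_product]
  have hunion : ∑ d ∈ A ∪ B, g d = ∑ d ∈ A, g d + ∑ d ∈ B, g d := Finset.sum_union hdisj
  have h2 : 2 * (p.darts.map g).sum ≤ ∑ i, ∑ j, if G.Adj i j then (x i - x j)^2 else 0 := by
    rw [hlist]
    calc 2 * ∑ d ∈ A, g d = ∑ d ∈ A, g d + ∑ d ∈ B, g d := by rw [hBsum]; ring
    _ = ∑ d ∈ A ∪ B, g d := hunion.symm
    _ ≤ _ := by rw [himage, ← hprod]; exact hsub
  linarith

private lemma exists_len_bound {V : Type*} [Fintype V] [DecidableEq V] {G : SimpleGraph V}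
    [DecidableRel G.Adj] (x : V → ℝ) {a b : V} (h : G.Reachable a b) (C : Finset V)
    (hC : ∀ y, G.Reachable a y → y ∈ C) :
    ∃ L : ℕ, L + 1 ≤ C.card ∧ (x b - x a)^2 ≤ (L : ℝ) *
      ((∑ i, ∑ j, if G.Adj i j then (x i - x j)^2 else 0) / 2) := by
  classical
  obtain ⟨q⟩ := h
  set p := q.toPath with hp
  refine ⟨p.1.length, ?_, ?_⟩
  · have hsup : p.1.support.toFinset ⊆ C := by
      intro y hy
      exact hC y ⟨p.1.takeUntil y (List.mem_toFinset.mp hy)⟩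
    have hcard := Finset.card_le_card hsup
    rwa [List.toFinset_card_of_nodup p.2.support_nodup, SimpleGraph.Walk.length_support] at hcard
  · calc (x b - x a)^2 ≤ (p.1.length : ℝ) *
        (p.1.darts.map (fun d => (x d.toProd.1 - x d.toProd.2)^2)).sum := chain_bound x p.1
    _ ≤ (p.1.length : ℝ) * ((∑ i, ∑ j, if G.Adj i j then (x i - x j)^2 else 0) / 2) :=
        mul_le_mul_of_nonneg_left (steps_le_double x p.1 p.2.isTrail.edges_nodup)
          (by positivity)

set_option maxHeartbeats 1000000

/-- For a simple graph on `N ≥ 1` vertices with Laplacian `L` and a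
`(0,1)`-diagonal matrix `Δ`, every nonzero eigenvalue `lam` of `H = L + Δ` satisfies
`lam ≥ 4 / (N * (N² - N + 4))`. -/
theorem leader_follower_matrix_nonzero_eigenvalue_lower_bound
    (N : ℕ) (hN : 1 ≤ N) (G : SimpleGraph (Fin N)) [DecidableRel G.Adj]
    (Δ : Fin N → ℝ) (hΔ : ∀ i, Δ i = 0 ∨ Δ i = 1)
    (H : Matrix (Fin N) (Fin N) ℝ) (hH : H = G.lapMatrix ℝ + Matrix.diagonal Δ)
    (lam : ℝ) (hlam : lam ≠ 0)
    (heig : ∃ v : Fin N → ℝ, v ≠ 0 ∧ H.mulVec v = lam • v) :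
    4 / ((N : ℝ) * ((N : ℝ) ^ 2 - (N : ℝ) + 4)) ≤ lam := by
  classical
  obtain ⟨v, hv0, hveq⟩ := heig
  obtain ⟨u₀, hu₀⟩ : ∃ u, v u ≠ 0 := by
    by_contra h; push_neg at h; exact hv0 (funext h)
  set w : Fin N → ℝ := fun u => if G.Reachable u₀ u then v u else 0 with hwdef
  set C : Finset (Fin N) := Finset.univ.filter (fun u => G.Reachable u₀ u) with hCdef
  have hmemC : ∀ y, G.Reachable u₀ y → y ∈ C := fun y hy =>
    Finset.mem_filter.mpr ⟨Finset.mem_univ y, hy⟩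
  have hCmem : ∀ y, y ∈ C → G.Reachable u₀ y := fun y hy => (Finset.mem_filter.mp hy).2
  have hu₀C : u₀ ∈ C := hmemC u₀ (SimpleGraph.Reachable.refl u₀)
  have hwu₀ : w u₀ = v u₀ := if_pos (SimpleGraph.Reachable.refl u₀)
  have hΔ0 : ∀ i, 0 ≤ Δ i := by
    intro i; rcases hΔ i with h | h <;> rw [h] <;> norm_num
  have hHoff : ∀ a b : Fin N, a ≠ b → ¬ G.Adj a b → H a b = 0 := by
    intro a b hab hadj
    simp [hH, Matrix.add_apply, SimpleGraph.lapMatrix, Matrix.sub_apply, SimpleGraph.degMatrix,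
      Matrix.diagonal_apply_ne _ hab, hadj]
  have hw : H *ᵥ w = lam • w := by
    funext a
    by_cases ha : G.Reachable u₀ a
    · have hterm : ∀ b, H a b * w b = H a b * v b := by
        intro b
        by_cases hb : G.Reachable u₀ b
        · simp [hwdef, hb]
        · have hwb : w b = 0 := if_neg hb
          have hHab : H a b = 0 := by
            apply hHoff
            · rintro rfl; exact hb ha
            · intro hadj; exact hb (ha.trans hadj.reachable)
          simp [hwb, hHab]
      have h1 : (H *ᵥ w) a = (H *ᵥ v) a := by
        simp only [Matrix.mulVec, dotProduct]
        exact Finset.sum_congr rfl fun b _ => hterm b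
      rw [h1, hveq]
      simp [hwdef, ha]
    · have h1 : (H *ᵥ w) a = 0 := by
        simp only [Matrix.mulVec, dotProduct]
        apply Finset.sum_eq_zero
        intro b _
        by_cases hb : G.Reachable u₀ b
        · have hHab : H a b = 0 := by
            apply hHoff
            · rintro rfl; exact ha hb
            · intro hadj; exact ha (hb.trans hadj.symm.reachable)
          simp [hHab]
        · simp [hwdef, if_neg hb]
      rw [h1]
      simp [hwdef, if_neg ha]
  set S : ℝ := ∑ u, w u ^ 2 with hSdef
  have hS : 0 < S := by
    have h1 : w u₀ ^ 2 ≤ S :=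
      Finset.single_le_sum (f := fun u => w u ^ 2) (fun i _ => sq_nonneg _) (Finset.mem_univ u₀)
    have h2 : 0 < w u₀ ^ 2 := by rw [hwu₀]; positivity
    linarith
  set Q : ℝ := ∑ i, ∑ j, if G.Adj i j then (w i - w j)^2 else 0 with hQdef
  set Dw : ℝ := ∑ i, Δ i * w i ^ 2 with hDwdef
  have hQ0 : 0 ≤ Q := by
    apply Finset.sum_nonneg; intro i _
    apply Finset.sum_nonneg; intro j _
    by_cases h : G.Adj i j <;> simp [h] <;> positivity
  have hDw0 : 0 ≤ Dw := by
    apply Finset.sum_nonneg; intro i _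
    have := hΔ0 i; positivity
  have hId : lam * S = Q / 2 + Dw := by
    have h1 : w ⬝ᵥ (H *ᵥ w) = lam * S := by
      rw [hw]
      simp only [dotProduct, Pi.smul_apply, smul_eq_mul, hSdef]
      rw [Finset.mul_sum]
      exact Finset.sum_congr rfl fun u _ => by ring
    have h2 : w ⬝ᵥ (H *ᵥ w) = Q / 2 + Dw := by
      rw [hH, Matrix.add_mulVec, dotProduct_add]
      congr 1
      · have h3 := G.lapMatrix_toLinearMap₂' ℝ w
        rw [Matrix.toLinearMap₂'_apply'] at h3
        exact h3
      · simp only [dotProduct, Matrix.mulVec_diagonal, hDwdef]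
        exact Finset.sum_congr rfl fun u _ => by ring
    rw [← h1, h2]
  have hlampos : 0 < lam := by
    rcases hlam.lt_or_gt with h | h
    · exfalso
      have : lam * S < 0 := mul_neg_of_neg_of_pos h hS
      linarith
    · exact h
  set n : ℕ := C.card with hndef
  have hn1 : 1 ≤ n := Finset.card_pos.mpr ⟨u₀, hu₀C⟩
  have hnN : n ≤ N := by
    have := Finset.card_le_univ C
    simpa using this
  have hn1R : (1:ℝ) ≤ (n:ℝ) := by exact_mod_cast hn1
  have hnNR : (n:ℝ) ≤ (N:ℝ) := by exact_mod_cast hnN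
  have hNR : (1:ℝ) ≤ (N:ℝ) := by exact_mod_cast hN
  have hSC : S = ∑ u ∈ C, w u ^ 2 := by
    rw [hSdef]
    symm
    apply Finset.sum_subset (Finset.subset_univ C)
    intro x _ hx
    have hx' : ¬ G.Reachable u₀ x := by simpa [hCdef] using hx
    simp [hwdef, if_neg hx']
  have hden : (0:ℝ) < (N : ℝ) * ((N : ℝ) ^ 2 - (N : ℝ) + 4) := by nlinarith
  rw [div_le_iff₀ hden]
  by_cases hcase : ∃ j, G.Reachable u₀ j ∧ Δ j = 1
  · -- Case A: grounded component
    obtain ⟨j, hjr, hjΔ⟩ := hcase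
    have hjC : j ∈ C := hmemC j hjr
    have hwj2 : w j ^ 2 ≤ Dw := by
      have h1 : Δ j * w j ^ 2 = w j ^ 2 := by rw [hjΔ]; ring
      calc w j ^ 2 = Δ j * w j ^ 2 := h1.symm
      _ ≤ Dw := Finset.single_le_sum (f := fun i => Δ i * w i ^ 2)
          (fun i _ => mul_nonneg (hΔ0 i) (sq_nonneg _)) (Finset.mem_univ j)
    have hkey : ∀ u ∈ C, w u ^ 2 ≤ (n : ℝ) * (lam * S) := by
      intro u huC
      have hru : G.Reachable j u := hjr.symm.trans (hCmem u huC)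
      obtain ⟨L, hL1, hL2⟩ := exists_len_bound w hru C
        (fun y hy => hmemC y (hjr.trans hy))
      rw [← hQdef] at hL2
      have hcs := aux_cs (w u - w j) (w j) L (Q/2) (Nat.cast_nonneg L) (by linarith) hL2
      have heq : (w u - w j) + w j = w u := by ring
      rw [heq] at hcs
      have hc : ((L:ℝ)+1) ≤ (n:ℝ) := by exact_mod_cast hL1
      have hle : Q/2 + w j ^ 2 ≤ lam * S := by rw [hId]; linarith
      calc w u ^ 2 ≤ ((L:ℝ)+1) * (Q/2 + w j ^ 2) := hcs
      _ ≤ (n:ℝ) * (lam * S) := by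
          apply mul_le_mul hc hle (by nlinarith [hQ0, sq_nonneg (w j)]) (by linarith)
    have hsum : S ≤ lam * S + ((n:ℝ) - 1) * ((n:ℝ) * (lam * S)) := by
      have hS' : S = w j ^ 2 + ∑ u ∈ C.erase j, w u ^ 2 := by
        rw [hSC]; exact (Finset.add_sum_erase C _ hjC).symm
      have h1 : w j ^ 2 ≤ lam * S := by rw [hId]; linarith
      have h2 : ∑ u ∈ C.erase j, w u ^ 2 ≤ ((n:ℝ) - 1) * ((n:ℝ) * (lam * S)) := by
        calc ∑ u ∈ C.erase j, w u ^ 2 ≤ (C.erase j).card • ((n:ℝ) * (lam * S)) :=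
            Finset.sum_le_card_nsmul _ _ _
              (fun x hx => hkey x (Finset.mem_of_mem_erase hx))
        _ = (((C.erase j).card : ℕ) : ℝ) * ((n:ℝ) * (lam * S)) := nsmul_eq_mul _ _
        _ = ((n:ℝ) - 1) * ((n:ℝ) * (lam * S)) := by
            rw [Finset.card_erase_of_mem hjC]
            congr 1
            rw [Nat.cast_sub hn1]
            simp
      linarith [hS']
    have hfin : 1 ≤ lam * ((n:ℝ)^2 - (n:ℝ) + 1) := by
      have h3 : lam * S + ((n:ℝ) - 1) * ((n:ℝ) * (lam * S))
          = lam * ((n:ℝ)^2 - (n:ℝ) + 1) * S := by ring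
      rw [h3] at hsum
      have h4 : 1 * S ≤ lam * ((n:ℝ)^2 - (n:ℝ) + 1) * S := by linarith
      have := (mul_le_mul_iff_of_pos_right hS).mp h4
      linarith
    -- numeric conclusion
    have hkey2 : 4 * ((n:ℝ)^2 - (n:ℝ) + 1) ≤ (N:ℝ) * ((N:ℝ)^2 - (N:ℝ) + 4) := by
      nlinarith [mul_nonneg (sub_nonneg.mpr hNR) (sq_nonneg ((N:ℝ) - 2)),
        mul_nonneg (sub_nonneg.mpr hnNR) (by linarith : (0:ℝ) ≤ (N:ℝ) + (n:ℝ) - 1)]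
    have h5 : lam * (4 * ((n:ℝ)^2 - (n:ℝ) + 1)) ≤ lam * ((N:ℝ) * ((N:ℝ)^2 - (N:ℝ) + 4)) :=
      mul_le_mul_of_nonneg_left hkey2 hlampos.le
    nlinarith [hfin]
  · -- Case B: no grounded vertex reachable from u₀
    push_neg at hcase
    have hΔw : ∀ b, Δ b * w b = 0 := by
      intro b
      by_cases hb : G.Reachable u₀ b
      · have : Δ b = 0 := by
          rcases hΔ b with h | h
          · exact h
          · exact absurd h (hcase b hb)
        simp [this]
      · simp [hwdef, if_neg hb]
    have hDwz : Dw = 0 := by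
      rw [hDwdef]
      apply Finset.sum_eq_zero
      intro i _
      have := hΔw i
      calc Δ i * w i ^ 2 = (Δ i * w i) * w i := by ring
      _ = 0 := by rw [this]; ring
    have hsum0 : ∑ u, w u = 0 := by
      have hA : ∑ u, (H *ᵥ w) u = lam * ∑ u, w u := by
        rw [hw]; simp [Finset.mul_sum]
      have hrow : ∀ b : Fin N, ∑ c, G.lapMatrix ℝ b c = 0 := by
        intro b
        have := congrFun (G.lapMatrix_mulVec_const_eq_zero (R := ℝ)) b
        simpa [Matrix.mulVec, dotProduct] using this
      have hcol : ∀ b : Fin N, ∑ u, H u b = Δ b := by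
        intro b
        rw [hH]
        simp only [Matrix.add_apply]
        rw [Finset.sum_add_distrib]
        have h1 : ∑ u, G.lapMatrix ℝ u b = 0 := by
          have h2 : ∀ u, G.lapMatrix ℝ u b = G.lapMatrix ℝ b u := fun u =>
            (G.isSymm_lapMatrix (R := ℝ)).apply b u
          rw [Finset.sum_congr rfl fun u _ => h2 u]
          exact hrow b
        have h3 : ∑ u, Matrix.diagonal Δ u b = Δ b := by
          simp only [Matrix.diagonal_apply]
          rw [Finset.sum_ite_eq' Finset.univ b Δ]
          simp
        rw [h1, h3, zero_add]
      have hB : ∑ u, (H *ᵥ w) u = 0 := by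
        calc ∑ u, (H *ᵥ w) u = ∑ u, ∑ b, H u b * w b := by
              simp [Matrix.mulVec, dotProduct]
        _ = ∑ b, ∑ u, H u b * w b := Finset.sum_comm
        _ = ∑ b, (∑ u, H u b) * w b := by
              exact Finset.sum_congr rfl fun b _ => (Finset.sum_mul _ _ _).symm
        _ = ∑ b, Δ b * w b := Finset.sum_congr rfl fun b _ => by rw [hcol b]
        _ = 0 := Finset.sum_eq_zero fun b _ => hΔw b
      rw [hB] at hA
      rcases mul_eq_zero.mp hA.symm with h | h
      · exact absurd h hlam
      · exact h
    have hsum0' : ∑ u ∈ C, w u = 0 := by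
      rw [← hsum0]
      apply Finset.sum_subset (Finset.subset_univ C)
      intro x _ hx
      have hx' : ¬ G.Reachable u₀ x := by simpa [hCdef] using hx
      simp [hwdef, if_neg hx']
    obtain ⟨i, hiC, hi⟩ := Finset.exists_max_image C w ⟨u₀, hu₀C⟩
    obtain ⟨j, hjC, hj⟩ := Finset.exists_min_image C w ⟨u₀, hu₀C⟩
    have hwi0 : 0 ≤ w i := by
      have h1 : ∑ u ∈ C, w u ≤ C.card • w i :=
        Finset.sum_le_card_nsmul _ _ _ (fun x hx => hi x hx)
      rw [hsum0', nsmul_eq_mul] at h1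
      by_contra hcon
      push_neg at hcon
      have : (n:ℝ) * w i < 0 := mul_neg_of_pos_of_neg (by linarith) hcon
      rw [← hndef] at h1
      linarith
    have hwj0 : w j ≤ 0 := by
      have h1 : C.card • w j ≤ ∑ u ∈ C, w u :=
        Finset.card_nsmul_le_sum _ _ _ (fun x hx => hj x hx)
      rw [hsum0', nsmul_eq_mul] at h1
      by_contra hcon
      push_neg at hcon
      have : 0 < (n:ℝ) * w j := mul_pos (by linarith) hcon
      rw [← hndef] at h1
      linarith
    have hu2 : ∀ u ∈ C, w u ^ 2 ≤ (w i - w j)^2 := by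
      intro u huC
      have h1 := hj u huC
      have h2 := hi u huC
      nlinarith [mul_nonneg (sub_nonneg.mpr h2) (sub_nonneg.mpr h1),
        mul_nonneg hwi0 (neg_nonneg.mpr hwj0),
        mul_nonneg (sub_nonneg.mpr h2) hwi0,
        mul_nonneg (neg_nonneg.mpr hwj0) (sub_nonneg.mpr h1)]
    have hrji : G.Reachable j i := (hCmem j hjC).symm.trans (hCmem i hiC)
    obtain ⟨L, hL1, hL2⟩ := exists_len_bound w hrji C
      (fun y hy => hmemC y ((hCmem j hjC).trans hy))
    rw [← hQdef] at hL2
    have hQS : Q / 2 = lam * S := by rw [hId, hDwz]; ring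
    rw [hQS] at hL2
    have hLn : (L:ℝ) ≤ (n:ℝ) - 1 := by
      have : (L:ℝ) + 1 ≤ (n:ℝ) := by exact_mod_cast hL1
      linarith
    have hij2 : (w i - w j)^2 ≤ ((n:ℝ) - 1) * (lam * S) := by
      calc (w i - w j)^2 ≤ (L:ℝ) * (lam * S) := hL2
      _ ≤ ((n:ℝ) - 1) * (lam * S) := by
          exact mul_le_mul_of_nonneg_right hLn (mul_nonneg hlampos.le hS.le)
    have hsum : S ≤ (n:ℝ) * (((n:ℝ) - 1) * (lam * S)) := by
      have hc1 : ∑ u ∈ C, w u ^ 2 ≤ C.card • ((w i - w j)^2) :=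
        Finset.sum_le_card_nsmul _ _ _ (fun x hx => hu2 x hx)
      rw [nsmul_eq_mul, ← hndef] at hc1
      have hc2 : (n:ℝ) * ((w i - w j)^2) ≤ (n:ℝ) * (((n:ℝ) - 1) * (lam * S)) :=
        mul_le_mul_of_nonneg_left hij2 (by linarith)
      linarith [hSC, hc1, hc2]
    have hfin : 1 ≤ lam * ((n:ℝ) * ((n:ℝ) - 1)) := by
      have h3 : (n:ℝ) * (((n:ℝ) - 1) * (lam * S)) = lam * ((n:ℝ) * ((n:ℝ) - 1)) * S := by ring
      rw [h3] at hsum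
      have h4 : 1 * S ≤ lam * ((n:ℝ) * ((n:ℝ) - 1)) * S := by linarith
      have := (mul_le_mul_iff_of_pos_right hS).mp h4
      linarith
    have hkey2 : 4 * ((n:ℝ) * ((n:ℝ) - 1)) ≤ (N:ℝ) * ((N:ℝ)^2 - (N:ℝ) + 4) := by
      nlinarith [mul_nonneg (by linarith : (0:ℝ) ≤ (N:ℝ)) (sq_nonneg (2*(N:ℝ) - 5)),
        mul_nonneg (sub_nonneg.mpr hnNR) (by linarith : (0:ℝ) ≤ (N:ℝ) + (n:ℝ) - 1),
        hNR]
    have h5 : lam * (4 * ((n:ℝ) * ((n:ℝ) - 1))) ≤ lam * ((N:ℝ) * ((N:ℝ)^2 - (N:ℝ) + 4)) :=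
      mul_le_mul_of_nonneg_left hkey2 hlampos.le
    nlinarith [hfin]
end

section
/- Let G be a connected simple (undirected) graph on N ≥ 2 vertices with Laplacian L ∈ ℝ^{N×N}, fix a vertex i, and let Δ = e_i e_iᵀ be the diagonal matrix with a single 1 in position (i,i) and zeros elsewhere. Then L + Δ is positive definite; more precisely, vᵀ(L + Δ)v ≥ 4/(N(N²−N+4)) for every unit vector v ∈ ℝ^N. -/
open Matrix Finset

namespace LapPinAux

variable {V : Type*} {G : SimpleGraph V}

/-- Cauchy–Schwarz along a walk. -/
lemma walk_sq_le (v : V → ℝ) {a b : V} (w : G.Walk a b) :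
    (v b - v a) ^ 2 ≤ (w.length : ℝ) *
      (w.darts.map (fun d => (v d.toProd.1 - v d.toProd.2) ^ 2)).sum := by
  induction w with
  | nil => simp
  | @cons a c b h p ih =>
    have hS : 0 ≤ (p.darts.map (fun d => (v d.toProd.1 - v d.toProd.2) ^ 2)).sum := by
      apply List.sum_nonneg
      intro x hx
      obtain ⟨d, _, rfl⟩ := List.mem_map.mp hx
      positivity
    have hn : (0 : ℝ) ≤ (p.length : ℝ) := Nat.cast_nonneg _
    simp only [SimpleGraph.Walk.darts_cons, List.map_cons, List.sum_cons,
      SimpleGraph.Walk.length_cons, Nat.cast_add, Nat.cast_one]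
    set n : ℝ := (p.length : ℝ)
    set S : ℝ := (p.darts.map (fun d => (v d.toProd.1 - v d.toProd.2) ^ 2)).sum
    set x : ℝ := v c - v a
    set y : ℝ := v b - v c
    have hxy : v b - v a = x + y := by ring
    have hx2 : (v a - v c) ^ 2 = x ^ 2 := by ring
    rw [hxy, hx2]
    have hA : 0 ≤ n * S - y ^ 2 := by linarith [ih]
    rcases eq_or_lt_of_le hn with h0 | hpos
    · have hy : y ^ 2 ≤ 0 := by nlinarith [ih]
      have hy0 : y = 0 := by
        have := sq_nonneg y
        exact pow_eq_zero_iff (n := 2) (by norm_num) |>.mp (le_antisymm hy this)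
      have hxy' : x * y = 0 := by rw [hy0, mul_zero]
      have hyy : y ^ 2 = 0 := by rw [hy0]; ring
      nlinarith [hS]
    · nlinarith [sq_nonneg (n * x - y), hA, mul_pos hpos hpos,
        mul_nonneg (le_of_lt hpos) hA]

variable [DecidableEq V] [Fintype V] [DecidableRel G.Adj]

/-- For a trail, the sum of squared differences over its darts is at most
the full edge sum. -/
lemma trail_sum_le (v : V → ℝ) {a b : V} (w : G.Walk a b) (hw : w.IsTrail) :
    (w.darts.map (fun d => (v d.toProd.1 - v d.toProd.2) ^ 2)).sum ≤
      (∑ x : V, ∑ y : V, if G.Adj x y then (v x - v y) ^ 2 else 0) / 2 := by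
  classical
  set f : G.Dart → ℝ := fun d => (v d.toProd.1 - v d.toProd.2) ^ 2 with hf
  set g : V × V → ℝ := fun p => if G.Adj p.1 p.2 then (v p.1 - v p.2) ^ 2 else 0 with hg
  have hnd : w.darts.Nodup := by
    have := hw.edges_nodup
    rw [SimpleGraph.Walk.edges] at this
    exact this.of_map _
  have hinj : ∀ d ∈ w.darts, ∀ e ∈ w.darts, d.edge = e.edge → d = e := by
    have := hw.edges_nodup
    rw [SimpleGraph.Walk.edges] at this
    exact fun d hd e he hde => List.inj_on_of_nodup_map this hd he hde
  set s : Finset G.Dart := w.darts.toFinset with hs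
  set t : Finset G.Dart := s.image SimpleGraph.Dart.symm with ht
  have hst : Disjoint s t := by
    rw [Finset.disjoint_left]
    intro d hd hdt
    obtain ⟨e, he, rfl⟩ := Finset.mem_image.mp hdt
    have hd' : e.symm ∈ w.darts := List.mem_toFinset.mp hd
    have he' : e ∈ w.darts := List.mem_toFinset.mp he
    have : e.symm = e := hinj _ hd' _ he' (SimpleGraph.Dart.edge_symm e)
    exact SimpleGraph.Dart.symm_ne e this
  have hsum_s : s.sum f = (w.darts.map f).sum := List.sum_toFinset f hnd
  have hsum_t : t.sum f = s.sum f := by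
    rw [ht, Finset.sum_image (fun x _ y _ h =>
      SimpleGraph.Dart.symm_involutive.injective h)]
    apply Finset.sum_congr rfl
    intro d _
    show (v d.symm.toProd.1 - v d.symm.toProd.2) ^ 2 = (v d.toProd.1 - v d.toProd.2) ^ 2
    have h1 : d.symm.toProd.1 = d.toProd.2 := rfl
    have h2 : d.symm.toProd.2 = d.toProd.1 := rfl
    rw [h1, h2]; ring
  have hfg : ∀ d : G.Dart, f d = g d.toProd := by
    intro d
    simp only [hf, hg, d.adj, if_true]
  have hkey : (s ∪ t).sum f ≤ ∑ x : V, ∑ y : V, if G.Adj x y then (v x - v y) ^ 2 else 0 := by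
    have h1 : (s ∪ t).sum f = ((s ∪ t).image (fun d => d.toProd)).sum g := by
      rw [Finset.sum_image (fun x _ y _ h => SimpleGraph.Dart.toProd_injective h)]
      exact Finset.sum_congr rfl fun d _ => hfg d
    rw [h1, ← Fintype.sum_prod_type']
    apply Finset.sum_le_sum_of_subset_of_nonneg (Finset.subset_univ _)
    intro p _ _
    show (0:ℝ) ≤ if G.Adj p.1 p.2 then (v p.1 - v p.2) ^ 2 else 0
    positivity
  rw [Finset.sum_union hst, hsum_s, hsum_t, hsum_s] at hkey
  linarith

end LapPinAux

open LapPinAux in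
/-- For a connected simple graph on `N ≥ 2` vertices with Laplacian `L` and
`Δ = eᵢeᵢᵀ`, the matrix `L + Δ` is positive definite, and
`vᵀ(L + Δ)v ≥ 4/(N(N² - N + 4))` for every (Euclidean) unit vector `v`. -/
theorem laplacian_plus_single_pinning_posDef
    (N : ℕ) (hN : 2 ≤ N) (G : SimpleGraph (Fin N)) [DecidableRel G.Adj]
    (hconn : G.Connected) (L : Matrix (Fin N) (Fin N) ℝ) (hL : L = G.lapMatrix ℝ)
    (i : Fin N) (Δ : Matrix (Fin N) (Fin N) ℝ) (hΔ : Δ = Matrix.single i i 1) :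
    (L + Δ).PosDef ∧
      ∀ v : Fin N → ℝ, (∑ k, v k ^ 2 = 1) →
        4 / ((N : ℝ) * ((N : ℝ) ^ 2 - (N : ℝ) + 4)) ≤ v ⬝ᵥ ((L + Δ).mulVec v) := by
  subst hL hΔ
  set n : ℝ := (N : ℝ) with hn_def
  have hn : (2 : ℝ) ≤ n := by rw [hn_def]; exact_mod_cast hN
  -- quadratic form decomposition
  have quad : ∀ v : Fin N → ℝ,
      v ⬝ᵥ ((G.lapMatrix ℝ + Matrix.single i i 1) *ᵥ v)
        = v ⬝ᵥ (G.lapMatrix ℝ *ᵥ v) + v i ^ 2 := by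
    intro v
    rw [Matrix.add_mulVec, dotProduct_add, Matrix.single_mulVec]
    congr 1
    simp only [dotProduct, Function.update_apply, Pi.zero_apply, mul_ite, mul_zero,
      Finset.sum_ite_eq', Finset.mem_univ, if_true]
    ring
  -- nonnegativity of the Laplacian quadratic form
  have hQ0 : ∀ v : Fin N → ℝ, 0 ≤ v ⬝ᵥ (G.lapMatrix ℝ *ᵥ v) := by
    intro v
    have := (Matrix.posSemidef_iff_dotProduct_mulVec.mp (SimpleGraph.posSemidef_lapMatrix ℝ G)).2 v
    simpa using this
  -- the quantitative key lemma
  have hdist : ∀ (v : Fin N → ℝ) (k : Fin N),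
      (v k - v i) ^ 2 ≤ (n - 1) * (v ⬝ᵥ (G.lapMatrix ℝ *ᵥ v)) := by
    intro v k
    have hQform : v ⬝ᵥ (G.lapMatrix ℝ *ᵥ v)
        = (∑ x : Fin N, ∑ y : Fin N, if G.Adj x y then (v x - v y) ^ 2 else 0) / 2 := by
      rw [← Matrix.toLinearMap₂'_apply', SimpleGraph.lapMatrix_toLinearMap₂']
    obtain ⟨w⟩ := hconn.preconnected i k
    set p : G.Path i k := w.toPath with hp
    have hlen : ((p : G.Walk i k).length : ℝ) ≤ n - 1 := by
      have h1 : (p : G.Walk i k).length < N := by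
        simpa [Fintype.card_fin] using p.2.length_lt
      have : ((p : G.Walk i k).length : ℝ) + 1 ≤ n := by
        rw [hn_def]; exact_mod_cast Nat.succ_le_of_lt h1
      linarith
    have h1 := walk_sq_le v (p : G.Walk i k)
    have h2 := trail_sum_le v (p : G.Walk i k) p.2.isTrail
    have hT : 0 ≤ ((p : G.Walk i k).darts.map
        (fun d => (v d.toProd.1 - v d.toProd.2) ^ 2)).sum := by
      apply List.sum_nonneg
      intro x hx
      obtain ⟨d, _, rfl⟩ := List.mem_map.mp hx
      positivity
    have hQnn := hQ0 v
    have hlen0 : (0 : ℝ) ≤ ((p : G.Walk i k).length : ℝ) := Nat.cast_nonneg _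
    calc (v k - v i) ^ 2 ≤ ((p : G.Walk i k).length : ℝ) *
          ((p : G.Walk i k).darts.map (fun d => (v d.toProd.1 - v d.toProd.2) ^ 2)).sum := h1
      _ ≤ ((p : G.Walk i k).length : ℝ) * (v ⬝ᵥ (G.lapMatrix ℝ *ᵥ v)) := by
          apply mul_le_mul_of_nonneg_left _ hlen0
          rw [hQform]; exact h2
      _ ≤ (n - 1) * (v ⬝ᵥ (G.lapMatrix ℝ *ᵥ v)) :=
          mul_le_mul_of_nonneg_right hlen hQnn
  constructor
  · -- positive definiteness
    rw [Matrix.posDef_iff_dotProduct_mulVec]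
    constructor
    · have h1 : (G.lapMatrix ℝ).IsHermitian := (SimpleGraph.posSemidef_lapMatrix ℝ G).1
      have h2 : (Matrix.single i i (1 : ℝ)).IsHermitian := by
        ext a b
        simp only [Matrix.conjTranspose_apply, Matrix.single, Matrix.of_apply,
          star_trivial]
        by_cases h : i = a <;> by_cases h' : i = b <;> simp [h, h']
      exact h1.add h2
    · intro x hx
      have hst : star x = x := by simp
      rw [hst, quad x]
      have h0 := hQ0 x
      have hxi := sq_nonneg (x i)
      rcases lt_or_eq_of_le (by linarith : (0:ℝ) ≤ x ⬝ᵥ (G.lapMatrix ℝ *ᵥ x) + x i ^ 2) with h | h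
      · exact h
      exfalso
      have hQz : x ⬝ᵥ (G.lapMatrix ℝ *ᵥ x) = 0 := by nlinarith
      have hxiz : x i = 0 := by nlinarith
      have hform : Matrix.toLinearMap₂' ℝ (G.lapMatrix ℝ) x x = 0 := by
        rw [Matrix.toLinearMap₂'_apply']; exact hQz
      have hall := (SimpleGraph.lapMatrix_toLinearMap₂'_apply'_eq_zero_iff_forall_reachable
        G x).mp hform
      exact hx (funext fun j => by rw [hall j i (hconn.preconnected j i)]; simp [hxiz])
  · -- the quantitative bound
    intro v hv
    rw [quad v]
    set Q : ℝ := v ⬝ᵥ (G.lapMatrix ℝ *ᵥ v) with hQdef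
    have hQnn : 0 ≤ Q := hQ0 v
    have key : ∀ k : Fin N, 4 * n ^ 2 * v k ^ 2 ≤
        (4 * n ^ 2 + n ^ 4) * v i ^ 2 + (4 * n ^ 2 + 16) * ((n - 1) * Q) := by
      intro k
      have hd := hdist v k
      rw [← hQdef] at hd
      have h1 : 0 ≤ (4 * n ^ 2 + 16) * ((n - 1) * Q - (v k - v i) ^ 2) :=
        mul_nonneg (by positivity) (by linarith [hd])
      nlinarith [sq_nonneg (n ^ 2 * v i - 4 * (v k - v i))]
    have hsum : ∑ k ∈ Finset.univ.erase i, v k ^ 2 = 1 - v i ^ 2 := by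
      have h := Finset.add_sum_erase Finset.univ (fun k => v k ^ 2) (Finset.mem_univ i)
      rw [hv] at h
      have h2 : v i ^ 2 + ∑ x ∈ Finset.univ.erase i, v x ^ 2 = 1 := h
      linarith
    have hcard : ((Finset.univ.erase i).card : ℝ) = n - 1 := by
      rw [Finset.card_erase_of_mem (Finset.mem_univ i)]
      simp only [Finset.card_univ, Fintype.card_fin]
      have : (1:ℕ) ≤ N := by omega
      push_cast [Nat.cast_sub this]
      ring
    have h2 : 4 * n ^ 2 * (1 - v i ^ 2) ≤
        (n - 1) * ((4 * n ^ 2 + n ^ 4) * v i ^ 2 + (4 * n ^ 2 + 16) * ((n - 1) * Q)) := by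
      have hb := Finset.sum_le_card_nsmul (Finset.univ.erase i)
        (fun k => 4 * n ^ 2 * v k ^ 2)
        ((4 * n ^ 2 + n ^ 4) * v i ^ 2 + (4 * n ^ 2 + 16) * ((n - 1) * Q))
        (fun k _ => key k)
      rw [nsmul_eq_mul, hcard] at hb
      calc 4 * n ^ 2 * (1 - v i ^ 2) = ∑ k ∈ Finset.univ.erase i, 4 * n ^ 2 * v k ^ 2 := by
            rw [← Finset.mul_sum, hsum]
        _ ≤ _ := hb
    have hpoly : 4 * (n ^ 2 + 4) * (n - 1) ^ 2 ≤ n ^ 3 * (n ^ 2 - n + 4) := by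
      nlinarith [sq_nonneg (n - 2), sq_nonneg n, mul_nonneg (sub_nonneg.2 hn)
        (sub_nonneg.2 hn), mul_nonneg (mul_nonneg (sub_nonneg.2 hn) (sub_nonneg.2 hn))
        (sub_nonneg.2 hn), sq_nonneg (n * (n - 2)), sq_nonneg (n^2 - 2*n)]
    have h3 : 4 * n ^ 2 ≤ n ^ 3 * (n ^ 2 - n + 4) * (v i ^ 2 + Q) := by
      have hgap : 0 ≤ (n ^ 3 * (n ^ 2 - n + 4) - 4 * (n ^ 2 + 4) * (n - 1) ^ 2) * Q :=
        mul_nonneg (by linarith) hQnn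
      nlinarith [h2, hgap]
    have hden : (0 : ℝ) < n * (n ^ 2 - n + 4) := by nlinarith
    rw [div_le_iff₀ hden]
    have hn2 : (0 : ℝ) < n ^ 2 := by positivity
    nlinarith [h3, sq_nonneg (v i)]
end

section
/- Let H_1, …, H_q ∈ ℝ^{N×N} be symmetric positive semidefinite matrices such that the sum H_1 + ⋯ + H_q is positive definite. For each r let P_r ∈ ℝ^{N×N} be the orthogonal projection onto ker(H_r). Then the product P_q P_{q−1} ⋯ P_1 has operator norm strictly less than 1: ‖P_q ⋯ P_1‖ < 1. -/
open Matrix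

/-- The operator norm of a square real matrix induced by the Euclidean vector norm. -/
noncomputable def opNorm {k : Type*} [Fintype k] [DecidableEq k] (M : Matrix k k ℝ) : ℝ :=
  ‖Matrix.toEuclideanCLM (𝕜 := ℝ) M‖

/-- The product `f (b-1) * f (b-2) * ⋯ * f a` (the identity if `b ≤ a`):
later factors multiply on the left. -/
def descProd {R : Type*} [Monoid R] (f : ℕ → R) (a b : ℕ) : R :=
  ((List.range (b - a)).map (fun i => f (b - 1 - i))).prod

lemma descProd_zero {R : Type*} [Monoid R] (f : ℕ → R) : descProd f 0 0 = 1 := by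
  simp [descProd]

lemma descProd_succ {R : Type*} [Monoid R] (f : ℕ → R) (q : ℕ) :
    descProd f 0 (q + 1) = f q * descProd f 0 q := by
  have h : ((fun i => f (q + 1 - 1 - i)) ∘ Nat.succ) = fun i => f (q - 1 - i) := by
    funext i
    simp only [Function.comp_apply]
    congr 1
    omega
  simp only [descProd, Nat.sub_zero]
  rw [List.range_succ_eq_map, List.map_cons, List.prod_cons, List.map_map, h]
  congr 2

/-- If `H 0, …, H (q-1)` are symmetric positive semidefinite real `N × N`
matrices whose sum is positive definite, and `P r` is the orthogonal projection onto
`ker (H r)` for each `r < q`, then `‖P (q-1) ⋯ P 1 * P 0‖ < 1`. -/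
theorem opNorm_prod_proj_ker_lt_one
    (N q : ℕ) (H P : ℕ → Matrix (Fin N) (Fin N) ℝ)
    (hH : ∀ r < q, (H r).PosSemidef)
    (hsum : (∑ r ∈ Finset.range q, H r).PosDef)
    (hPsymm : ∀ r < q, (P r)ᵀ = P r)
    (hPidem : ∀ r < q, P r * P r = P r)
    (hPrange : ∀ r < q, ∀ x : Fin N → ℝ, (H r).mulVec ((P r).mulVec x) = 0)
    (hPfix : ∀ r < q, ∀ x : Fin N → ℝ, (H r).mulVec x = 0 → (P r).mulVec x = x) :
    opNorm (descProd P 0 q) < 1 := by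
  classical
  set E := EuclideanSpace ℝ (Fin N)
  set T : ℕ → (E →L[ℝ] E) := fun r => Matrix.toEuclideanCLM (𝕜 := ℝ) (P r) with hT
  -- The projections are contractions, with equality only at fixed points.
  have proj_le : ∀ r < q, ∀ v : E, ‖T r v‖ ≤ ‖v‖ ∧ (‖T r v‖ = ‖v‖ → T r v = v) := by
    intro r hr v
    have herm : (P r).IsHermitian := by
      have := hPsymm r hr
      simpa [Matrix.IsHermitian, Matrix.conjTranspose_eq_transpose_of_trivial] using this
    have hsymm : (Matrix.toEuclideanLin (P r)).IsSymmetric :=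
      Matrix.isHermitian_iff_isSymmetric.mp herm
    have happ : ∀ w : E, T r w = Matrix.toEuclideanLin (P r) w := by
      intro w
      rw [← Matrix.coe_toEuclideanCLM_eq_toEuclideanLin]
      rfl
    have hTT : T r (T r v) = T r v := by
      have : T r * T r = T r := by
        have hmul := _root_.map_mul (Matrix.toEuclideanCLM (𝕜 := ℝ) (n := Fin N)) (P r) (P r)
        simp only [hT]
        rw [← hmul, hPidem r hr]
      calc T r (T r v) = (T r * T r) v := rfl
        _ = T r v := by rw [this]
    have hinner : (inner ℝ v (T r v) : ℝ) = inner ℝ (T r v) (T r v) := by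
      have hLL : Matrix.toEuclideanLin (P r) ((Matrix.toEuclideanLin (P r)) v) =
          (Matrix.toEuclideanLin (P r)) v := by
        have h := hTT
        simp only [happ] at h
        exact h
      have h2 : (inner ℝ ((Matrix.toEuclideanLin (P r)) v) ((Matrix.toEuclideanLin (P r)) v) : ℝ) =
          inner ℝ v ((Matrix.toEuclideanLin (P r)) ((Matrix.toEuclideanLin (P r)) v)) :=
        hsymm v ((Matrix.toEuclideanLin (P r)) v)
      simp only [happ]
      rw [h2, hLL]
    have hsq : ‖v - T r v‖ ^ 2 = ‖v‖ ^ 2 - ‖T r v‖ ^ 2 := by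
      have h1 : ‖v - T r v‖ ^ 2 = ‖v‖ ^ 2 - 2 * (inner ℝ v (T r v) : ℝ) + ‖T r v‖ ^ 2 :=
        norm_sub_sq_real v (T r v)
      have h2 : (inner ℝ (T r v) (T r v) : ℝ) = ‖T r v‖ ^ 2 := real_inner_self_eq_norm_sq (T r v)
      rw [h1, hinner, h2]; ring
    have hle : ‖T r v‖ ≤ ‖v‖ := by
      nlinarith [sq_nonneg (‖v - T r v‖), norm_nonneg (T r v), norm_nonneg v,
        sq_nonneg (‖v‖ + ‖T r v‖)]
    refine ⟨hle, fun heq => ?_⟩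
    have : ‖v - T r v‖ ^ 2 = 0 := by rw [hsq, heq]; ring
    have : v - T r v = 0 := by
      have := pow_eq_zero_iff (n := 2) (by norm_num) |>.mp this
      exact norm_eq_zero.mp this
    have := sub_eq_zero.mp this
    exact this.symm
  -- Key inductive claim.
  have key : ∀ j ≤ q, ∀ v : E,
      ‖(Matrix.toEuclideanCLM (𝕜 := ℝ) (descProd P 0 j)) v‖ ≤ ‖v‖ ∧
      (‖(Matrix.toEuclideanCLM (𝕜 := ℝ) (descProd P 0 j)) v‖ = ‖v‖ →
        (Matrix.toEuclideanCLM (𝕜 := ℝ) (descProd P 0 j)) v = v ∧ ∀ r < j, T r v = v) := by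
    intro j
    induction j with
    | zero =>
      intro _ v
      rw [descProd_zero, _root_.map_one]
      exact ⟨le_refl _, fun _ => ⟨rfl, fun r hr => absurd hr (Nat.not_lt_zero r)⟩⟩
    | succ j ih =>
      intro hj v
      have hjq : j < q := hj
      have hjle : j ≤ q := le_of_lt hjq
      have hsplit : (Matrix.toEuclideanCLM (𝕜 := ℝ) (descProd P 0 (j + 1))) v =
          T j ((Matrix.toEuclideanCLM (𝕜 := ℝ) (descProd P 0 j)) v) := by
        rw [descProd_succ, _root_.map_mul]; rfl
      set w := (Matrix.toEuclideanCLM (𝕜 := ℝ) (descProd P 0 j)) v with hw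
      have ihle := (ih hjle v).1
      have hTle := (proj_le j hjq w).1
      constructor
      · rw [hsplit]; exact le_trans hTle ihle
      · intro heq
        rw [hsplit] at heq
        have hwv : ‖w‖ = ‖v‖ := le_antisymm ihle (heq ▸ hTle)
        obtain ⟨hMv, hfix⟩ := (ih hjle v).2 hwv
        have hwv' : w = v := hMv
        have hTv : T j v = v := by
          apply (proj_le j hjq v).2
          rw [← hwv'] at heq ⊢
          rw [heq, hwv]
        refine ⟨?_, ?_⟩
        · rw [hsplit, hwv', hTv]
        · intro r hr
          rcases Nat.lt_succ_iff_lt_or_eq.mp hr with h | h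
          · exact hfix r h
          · rw [h]; exact hTv
  -- Handle the trivial case N = 0.
  rcases Nat.eq_zero_or_pos N with hN | hN
  · subst hN
    have hzero : (Matrix.toEuclideanCLM (𝕜 := ℝ) (descProd P 0 q)) = 0 := by
      ext v i
      exact absurd i.2 (by omega)
    rw [opNorm, hzero, norm_zero]
    norm_num
  -- Main case: N > 0.
  have : Nonempty (Fin N) := ⟨⟨0, hN⟩⟩
  have hnt : Nontrivial E := by
    have hfr : Module.finrank ℝ E = N := finrank_euclideanSpace_fin
    exact Module.nontrivial_of_finrank_pos (R := ℝ) (by omega)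
  set M := Matrix.toEuclideanCLM (𝕜 := ℝ) (descProd P 0 q) with hM
  -- Norm is attained on the compact sphere.
  have hcs : IsCompact (Metric.sphere (0 : E) 1) := isCompact_sphere 0 1
  have hns : (Metric.sphere (0 : E) 1).Nonempty := NormedSpace.sphere_nonempty.mpr zero_le_one
  obtain ⟨x₀, hx₀s, hmax⟩ := hcs.exists_isMaxOn hns
    ((continuous_norm.comp M.continuous).continuousOn)
  have hx₀norm : ‖x₀‖ = 1 := mem_sphere_zero_iff_norm.mp hx₀s
  -- Strict inequality at the maximizer.
  have hlt : ‖M x₀‖ < 1 := by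
    have hle : ‖M x₀‖ ≤ 1 := by
      have := (key q le_rfl x₀).1
      rwa [hx₀norm] at this
    rcases lt_or_eq_of_le hle with h | h
    · exact h
    · exfalso
      have heq : ‖M x₀‖ = ‖x₀‖ := by rw [h, hx₀norm]
      obtain ⟨_, hfix⟩ := (key q le_rfl x₀).2 heq
      set y : Fin N → ℝ := WithLp.equiv 2 (Fin N → ℝ) x₀ with hy
      have hy0 : y ≠ 0 := by
        intro h0
        have : x₀ = 0 := by
          have := congrArg (WithLp.equiv 2 (Fin N → ℝ)).symm h0
          simpa [hy] using this
        rw [this, norm_zero] at hx₀norm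
        norm_num at hx₀norm
      have hPy : ∀ r < q, (P r) *ᵥ y = y := by
        intro r hr
        have h1 : T r x₀ = x₀ := hfix r hr
        have h2 : T r ((WithLp.equiv 2 (Fin N → ℝ)).symm y) =
            (WithLp.equiv 2 (Fin N → ℝ)).symm ((P r) *ᵥ y) :=
          Matrix.toEuclideanCLM_toLp (P r) y
        have h3 : (WithLp.equiv 2 (Fin N → ℝ)).symm y = x₀ := by simp [hy]
        rw [h3, h1] at h2
        have := congrArg (WithLp.equiv 2 (Fin N → ℝ)) h2
        simpa [hy] using this.symm
      have hHy : ∀ r < q, (H r) *ᵥ y = 0 := by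
        intro r hr
        have := hPrange r hr y
        rwa [hPy r hr] at this
      have hsum0 : (∑ r ∈ Finset.range q, H r) *ᵥ y = 0 := by
        have hlin : ∀ s : Finset ℕ, (∑ r ∈ s, H r) *ᵥ y = ∑ r ∈ s, (H r *ᵥ y) := by
          intro s
          induction s using Finset.induction with
          | empty => simp [Matrix.zero_mulVec]
          | insert _ _ hni ih =>
            rw [Finset.sum_insert hni, Finset.sum_insert hni, Matrix.add_mulVec, ih]
        rw [hlin]
        exact Finset.sum_eq_zero fun r hr => hHy r (Finset.mem_range.mp hr)
      have := hsum.dotProduct_mulVec_pos hy0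
      rw [hsum0] at this
      simp at this
  -- The operator norm is bounded by the value at the maximizer.
  have hMnorm : ‖M‖ ≤ ‖M x₀‖ := by
    apply ContinuousLinearMap.opNorm_le_bound _ (norm_nonneg _)
    intro x
    rcases eq_or_ne x 0 with hx | hx
    · simp [hx]
    · have hxn : ‖x‖ ≠ 0 := norm_ne_zero_iff.mpr hx
      set u := ‖x‖⁻¹ • x with hu
      have hun : ‖u‖ = 1 := by
        rw [hu, norm_smul, norm_inv, norm_norm, inv_mul_cancel₀ hxn]
      have hus : u ∈ Metric.sphere (0 : E) 1 := mem_sphere_zero_iff_norm.mpr hun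
      have h5 : ‖M (‖x‖⁻¹ • x)‖ ≤ ‖M x₀‖ := hmax hus
      rw [M.map_smul, norm_smul, norm_inv, norm_norm] at h5
      have this := h5
      have hxpos : (0 : ℝ) < ‖x‖ := norm_pos_iff.mpr hx
      calc ‖M x‖ = ‖x‖ * (‖x‖⁻¹ * ‖M x‖) := by field_simp
        _ ≤ ‖x‖ * ‖M x₀‖ := by
            apply mul_le_mul_of_nonneg_left this (norm_nonneg x)
        _ = ‖M x₀‖ * ‖x‖ := mul_comm _ _
  calc opNorm (descProd P 0 q) = ‖M‖ := rfl
    _ ≤ ‖M x₀‖ := hMnorm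
    _ < 1 := hlt
end

section
/- Let H ∈ ℝ^{N×N} be symmetric with an orthonormal eigenbasis ξ_1, …, ξ_N of ℝ^N, where Hξ_p = 0 for p = 1, …, n₀ and Hξ_p = λ_p ξ_p with λ_p ≠ 0 for p = n₀+1, …, N. Set Q = [ξ_1 ⋯ ξ_{n₀}] ∈ ℝ^{N×n₀}, Γ = [ξ_{n₀+1} ⋯ ξ_N] ∈ ℝ^{N×(N−n₀)}, and let A, F ∈ ℝ^{n×n} be arbitrary. Let M = diag(A − λ_{n₀+1}F, …, A − λ_N F) be the block diagonal matrix in ℝ^{(N−n₀)n×(N−n₀)n}. Then for every t ∈ ℝ: exp(t(I_N ⊗ A − H ⊗ F)) = (QQᵀ) ⊗ e^{tA} + (Γ ⊗ I_n) e^{tM} (Γᵀ ⊗ I_n). -/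
open Matrix NormedSpace Kronecker

lemma exp_reindex_aux {m n : Type*} [Fintype m] [DecidableEq m] [Fintype n] [DecidableEq n]
    (e : m ≃ n) (M : Matrix m m ℝ) :
    exp ((reindex e e) M) = (reindex e e) (exp M) := by
  letI : SeminormedRing (Matrix m m ℝ) := Matrix.linftyOpSemiNormedRing
  letI : NormedRing (Matrix m m ℝ) := Matrix.linftyOpNormedRing
  letI : NormedAlgebra ℝ (Matrix m m ℝ) := Matrix.linftyOpNormedAlgebra
  letI : NormedAlgebra ℚ (Matrix m m ℝ) := Matrix.linftyOpNormedAlgebra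
  letI : SeminormedRing (Matrix n n ℝ) := Matrix.linftyOpSemiNormedRing
  letI : NormedRing (Matrix n n ℝ) := Matrix.linftyOpNormedRing
  letI : NormedAlgebra ℝ (Matrix n n ℝ) := Matrix.linftyOpNormedAlgebra
  letI : NormedAlgebra ℚ (Matrix n n ℝ) := Matrix.linftyOpNormedAlgebra
  have hc : Continuous (Matrix.reindexAlgEquiv ℝ ℝ e : Matrix m m ℝ →ₐ[ℝ] Matrix n n ℝ) := by
    exact
      ((continuous_id : Continuous (id : Matrix m m ℝ → Matrix m m ℝ)).matrix_reindex e e)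
  exact
    (map_exp ((Matrix.reindexAlgEquiv ℝ ℝ e).toAlgHom) hc M).symm

lemma exp_blockIf {K n : ℕ} (B : Fin K → Matrix (Fin n) (Fin n) ℝ) :
    exp (Matrix.of (fun x y => if x.1 = y.1 then B x.1 x.2 y.2 else 0 :
        (Fin K × Fin n) → (Fin K × Fin n) → ℝ)) =
      Matrix.of fun x y => if x.1 = y.1 then exp (B x.1) x.2 y.2 else 0 := by
  letI : SeminormedRing (Matrix (Fin n) (Fin n) ℝ) := Matrix.linftyOpSemiNormedRing
  letI : NormedRing (Matrix (Fin n) (Fin n) ℝ) := Matrix.linftyOpNormedRing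
  letI : NormedAlgebra ℝ (Matrix (Fin n) (Fin n) ℝ) := Matrix.linftyOpNormedAlgebra
  letI : NormedAlgebra ℚ (Matrix (Fin n) (Fin n) ℝ) := Matrix.linftyOpNormedAlgebra
  have h : (Matrix.of (fun x y => if x.1 = y.1 then B x.1 x.2 y.2 else 0 :
        (Fin K × Fin n) → (Fin K × Fin n) → ℝ)) =
      reindex (Equiv.prodComm (Fin n) (Fin K)) (Equiv.prodComm (Fin n) (Fin K))
        (blockDiagonal B) := by
    ext ⟨p, i⟩ ⟨q, j⟩
    simp [Matrix.blockDiagonal_apply]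
  rw [h, exp_reindex_aux, Matrix.exp_blockDiagonal]
  ext ⟨p, i⟩ ⟨q, j⟩
  simp [Matrix.blockDiagonal_apply, Pi.coe_exp]
  exact congrArg (fun X => if p = q then X i j else 0) (Pi.coe_exp B p)

lemma kron_sandwich_apply {N K n : ℕ} (V : Matrix (Fin N) (Fin K) ℝ)
    (Ew : Fin K → Matrix (Fin n) (Fin n) ℝ) (p q : Fin N) (i j : Fin n) :
    ((V ⊗ₖ (1 : Matrix (Fin n) (Fin n) ℝ)) *
      Matrix.of (fun x y : Fin K × Fin n => if x.1 = y.1 then Ew x.1 x.2 y.2 else 0) *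
      (Vᵀ ⊗ₖ (1 : Matrix (Fin n) (Fin n) ℝ))) (p, i) (q, j) =
      ∑ r : Fin K, V p r * V q r * Ew r i j := by
  simp only [Matrix.mul_apply, Fintype.sum_prod_type, kroneckerMap_apply, Matrix.one_apply,
    Matrix.of_apply, Matrix.transpose_apply, ite_mul, mul_ite, zero_mul, mul_zero,
    Finset.sum_ite_eq, Finset.sum_ite_eq', Finset.mem_univ, if_true, mul_one, one_mul,
    Finset.sum_const_zero]
  apply Finset.sum_congr rfl
  intro s _
  rw [Finset.sum_comm]
  simp only [Finset.sum_ite_eq, Finset.sum_ite_eq', Finset.mem_univ, if_true]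
  ring

/-- Spectral decomposition of the switched-system exponential: if `H` is
symmetric with orthonormal eigenbasis `ξ₁, …, ξ_N`, where the first `n₀` eigenvalues are
zero and the rest are nonzero, then
`exp(t(I_N ⊗ A − H ⊗ F)) = QQᵀ ⊗ e^{tA} + (Γ ⊗ I_n) e^{tM} (Γᵀ ⊗ I_n)` with
`M = diag(A − λ_{n₀+1}F, …, A − λ_N F)`. -/
theorem exp_IkronA_sub_HkronF_eq
    (N n n₀ : ℕ) (hn₀ : n₀ ≤ N)
    (H : Matrix (Fin N) (Fin N) ℝ) (hH : H.IsSymm)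
    (ξ : Fin N → Fin N → ℝ)
    (hortho : ∀ p q : Fin N, ξ p ⬝ᵥ ξ q = if p = q then (1 : ℝ) else 0)
    (lam : Fin N → ℝ)
    (hlam0 : ∀ p : Fin N, (p : ℕ) < n₀ → lam p = 0)
    (hlamne : ∀ p : Fin N, n₀ ≤ (p : ℕ) → lam p ≠ 0)
    (heig : ∀ p : Fin N, H.mulVec (ξ p) = lam p • ξ p)
    (A F : Matrix (Fin n) (Fin n) ℝ)
    (Q : Matrix (Fin N) (Fin n₀) ℝ)
    (hQ : Q = Matrix.of fun i q => ξ (Fin.castLE hn₀ q) i)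
    (Γ : Matrix (Fin N) (Fin (N - n₀)) ℝ)
    (hΓ : Γ = Matrix.of fun i q =>
      ξ (Fin.cast (Nat.add_sub_cancel' hn₀) (Fin.natAdd n₀ q)) i)
    (M : Matrix (Fin (N - n₀) × Fin n) (Fin (N - n₀) × Fin n) ℝ)
    (hM : M = Matrix.of fun x y =>
      if x.1 = y.1 then
        (A - lam (Fin.cast (Nat.add_sub_cancel' hn₀) (Fin.natAdd n₀ x.1)) • F) x.2 y.2
      else 0) :
    ∀ t : ℝ,
      exp (t • ((1 : Matrix (Fin N) (Fin N) ℝ) ⊗ₖ A - H ⊗ₖ F)) =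
        (Q * Qᵀ) ⊗ₖ exp (t • A) +
          (Γ ⊗ₖ (1 : Matrix (Fin n) (Fin n) ℝ)) * exp (t • M) *
            (Γᵀ ⊗ₖ (1 : Matrix (Fin n) (Fin n) ℝ)) := by
  intro t
  classical
  set U : Matrix (Fin N) (Fin N) ℝ := Matrix.of (fun i p => ξ p i) with hU
  -- orthogonality
  have hUtU : Uᵀ * U = 1 := by
    ext p q
    have := hortho p q
    simp only [dotProduct] at this
    simpa [Matrix.mul_apply, Matrix.one_apply, hU] using this
  have hUUt : U * Uᵀ = 1 := mul_eq_one_comm.mp hUtU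
  -- eigen decomposition
  have h2 : H * U = U * Matrix.diagonal lam := by
    ext i q
    have h := congrFun (heig q) i
    simp only [Matrix.mulVec, dotProduct, Pi.smul_apply, smul_eq_mul] at h
    rw [Matrix.mul_apply, Matrix.mul_diagonal]
    simp only [hU, Matrix.of_apply]
    rw [h, mul_comm]
  have hHdec : H = U * Matrix.diagonal lam * Uᵀ := by
    calc H = H * (U * Uᵀ) := by rw [hUUt, mul_one]
    _ = (H * U) * Uᵀ := by rw [mul_assoc]
    _ = U * Matrix.diagonal lam * Uᵀ := by rw [h2]
  -- conjugation identity
  set Y : Matrix (Fin N × Fin n) (Fin N × Fin n) ℝ :=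
    (1 : Matrix (Fin N) (Fin N) ℝ) ⊗ₖ A - Matrix.diagonal lam ⊗ₖ F with hY
  have hconj : (U ⊗ₖ (1 : Matrix (Fin n) (Fin n) ℝ)) * Y *
      (Uᵀ ⊗ₖ (1 : Matrix (Fin n) (Fin n) ℝ)) =
      (1 : Matrix (Fin N) (Fin N) ℝ) ⊗ₖ A - H ⊗ₖ F := by
    rw [hY, Matrix.mul_sub, Matrix.sub_mul, ← Matrix.mul_kronecker_mul,
      ← Matrix.mul_kronecker_mul, ← Matrix.mul_kronecker_mul, ← Matrix.mul_kronecker_mul]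
    rw [mul_one, one_mul, mul_one, one_mul, mul_one, hUUt, hHdec]
  -- units
  have hmul1 : (U ⊗ₖ (1 : Matrix (Fin n) (Fin n) ℝ)) * (Uᵀ ⊗ₖ 1) = 1 := by
    rw [← Matrix.mul_kronecker_mul, hUUt, mul_one, Matrix.one_kronecker_one]
  have hmul2 : (Uᵀ ⊗ₖ (1 : Matrix (Fin n) (Fin n) ℝ)) * (U ⊗ₖ 1) = 1 := by
    rw [← Matrix.mul_kronecker_mul, hUtU, mul_one, Matrix.one_kronecker_one]
  have hexp : exp (t • ((1 : Matrix (Fin N) (Fin N) ℝ) ⊗ₖ A - H ⊗ₖ F)) =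
      (U ⊗ₖ (1 : Matrix (Fin n) (Fin n) ℝ)) * exp (t • Y) *
        (Uᵀ ⊗ₖ (1 : Matrix (Fin n) (Fin n) ℝ)) := by
    have h : t • ((1 : Matrix (Fin N) (Fin N) ℝ) ⊗ₖ A - H ⊗ₖ F)
        = (U ⊗ₖ (1 : Matrix (Fin n) (Fin n) ℝ)) * (t • Y) *
          (Uᵀ ⊗ₖ (1 : Matrix (Fin n) (Fin n) ℝ)) := by
      rw [mul_smul_comm, smul_mul_assoc, hconj]
    rw [h]
    exact Matrix.exp_units_conj (⟨U ⊗ₖ 1, Uᵀ ⊗ₖ 1, hmul1, hmul2⟩ :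
      (Matrix (Fin N × Fin n) (Fin N × Fin n) ℝ)ˣ) (t • Y)
  -- block structure of exp (t • Y)
  set E : Fin N → Matrix (Fin n) (Fin n) ℝ := fun r => exp (t • (A - lam r • F)) with hE
  have hYexp : exp (t • Y) =
      Matrix.of fun x y : Fin N × Fin n => if x.1 = y.1 then E x.1 x.2 y.2 else 0 := by
    have hYe : t • Y = Matrix.of (fun x y => if x.1 = y.1 then
        (fun p => t • (A - lam p • F)) x.1 x.2 y.2 else 0 :
        (Fin N × Fin n) → (Fin N × Fin n) → ℝ) := by
      ext ⟨p, i⟩ ⟨q, j⟩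
      by_cases hpq : p = q
      · subst hpq
        simp [hY, Matrix.one_apply, mul_sub, mul_comm]
      · simp [hY, Matrix.one_apply, hpq, Matrix.diagonal_apply_ne _ hpq]
    rw [hYe]
    exact exp_blockIf fun p => t • (A - lam p • F)
  -- block structure of exp (t • M)
  set g : Fin (N - n₀) → Fin N :=
    fun s => Fin.cast (Nat.add_sub_cancel' hn₀) (Fin.natAdd n₀ s) with hg
  have hMexp : exp (t • M) =
      Matrix.of fun x y : Fin (N - n₀) × Fin n =>
        if x.1 = y.1 then E (g x.1) x.2 y.2 else 0 := by
    have hMe : t • M = Matrix.of (fun x y => if x.1 = y.1 then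
        (fun s => t • (A - lam (g s) • F)) x.1 x.2 y.2 else 0 :
        (Fin (N - n₀) × Fin n) → (Fin (N - n₀) × Fin n) → ℝ) := by
      ext ⟨p, i⟩ ⟨q, j⟩
      by_cases hpq : p = q
      · subst hpq; simp [hM, hg]
      · simp [hM, hpq]
    rw [hMe]
    exact exp_blockIf fun s => t • (A - lam (g s) • F)
  -- final computation
  rw [hexp, hYexp, hMexp, hΓ]
  ext ⟨p, i⟩ ⟨q, j⟩
  have hΓ' : (Matrix.of fun i q => ξ (g q) i : Matrix (Fin N) (Fin (N - n₀)) ℝ)ᵀ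
      = (Matrix.of fun i q => ξ (g q) i : Matrix (Fin N) (Fin (N - n₀)) ℝ)ᵀ := rfl
  rw [Matrix.add_apply, kron_sandwich_apply U E p q i j,
    kron_sandwich_apply (Matrix.of fun i q => ξ (g q) i) (fun s => E (g s)) p q i j]
  -- split the sum
  have hidl : ∀ r : Fin n₀,
      (finSumFinEquiv.trans (finCongr (Nat.add_sub_cancel' hn₀))) (Sum.inl r)
        = Fin.castLE hn₀ r := by
    intro r; ext; simp
  have hidr : ∀ s : Fin (N - n₀),
      (finSumFinEquiv.trans (finCongr (Nat.add_sub_cancel' hn₀))) (Sum.inr s) = g s := by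
    intro s; ext; simp [hg]
  have hE0 : ∀ r : Fin n₀, E (Fin.castLE hn₀ r) = exp (t • A) := by
    intro r
    have h0 : lam (Fin.castLE hn₀ r) = 0 := hlam0 _ (by simpa using r.isLt)
    simp [hE, h0]
  rw [← Equiv.sum_comp (finSumFinEquiv.trans (finCongr (Nat.add_sub_cancel' hn₀)))
    (fun r => U p r * U q r * E r i j), Fintype.sum_sum_type]
  congr 1
  · simp only [hidl, hE0]
    rw [hQ, kroneckerMap_apply, Matrix.mul_apply, Finset.sum_mul]
    apply Finset.sum_congr rfl
    intro r _
    simp only [hU, Matrix.of_apply, Matrix.transpose_apply]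
end
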